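/- arXiv:1710.06011 — 2 statements merged into one kernel-verified Lean document; each statement's English description precedes it below -/
import Mathlib

section
/- If U and W are irreducible T-modules that are isomorphic as Q-modules, then they have the same diameter, and any Q-module isomorphism σ : U → W satisfies σ(E*_{r+i} U) = E*_{r'+i} W for 0 ≤ i ≤ d, where r, r' are the endpoints of U, W and d their common diameter. -/
open Matrix BigOperators

noncomputable section

variable {X : Type*} [Fintype X] [DecidableEq X]

/-- The adjacency matrix of a graph, over ℂ. -/
def adjMat (G : SimpleGraph X) [DecidableRel G.Adj] : Matrix X X ℂ :=
  Matrix.of fun y z => if G.Adj y z then 1 else 0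

/-- The dual idempotent `E*_i`: diagonal 0-1 matrix projecting onto
vertices at distance `i` from `x` (zero for `i` outside the distance range). -/
def Estar (G : SimpleGraph X) (x : X) (i : ℤ) : Matrix X X ℂ :=
  Matrix.diagonal fun y => if (G.dist x y : ℤ) = i then 1 else 0

/-- The lowering matrix `L = Σ_{i=1}^D E*_{i-1} A E*_i`. -/
def lowerM (G : SimpleGraph X) [DecidableRel G.Adj] (x : X) (D : ℕ) : Matrix X X ℂ :=
  ∑ i ∈ Finset.Icc 1 D, Estar G x ((i : ℤ) - 1) * adjMat G * Estar G x i

/-- The flat matrix `F = Σ_{i=0}^D E*_i A E*_i`. -/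
def flatM (G : SimpleGraph X) [DecidableRel G.Adj] (x : X) (D : ℕ) : Matrix X X ℂ :=
  ∑ i ∈ Finset.range (D + 1), Estar G x i * adjMat G * Estar G x i

/-- The raising matrix `R = Σ_{i=0}^{D-1} E*_{i+1} A E*_i`. -/
def raiseM (G : SimpleGraph X) [DecidableRel G.Adj] (x : X) (D : ℕ) : Matrix X X ℂ :=
  ∑ i ∈ Finset.range D, Estar G x ((i : ℤ) + 1) * adjMat G * Estar G x i

/-- The subconstituent (Terwilliger) algebra `T`, generated by `A` and the `E*_i`. -/
def Talg (G : SimpleGraph X) [DecidableRel G.Adj] (x : X) (D : ℕ) :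
    Subalgebra ℂ (Matrix X X ℂ) :=
  Algebra.adjoin ℂ (insert (adjMat G) (Estar G x '' Set.Icc (0 : ℤ) (D : ℤ)))

/-- The quantum adjacency algebra `Q`, generated by `L, F, R`. -/
def Qalg (G : SimpleGraph X) [DecidableRel G.Adj] (x : X) (D : ℕ) :
    Subalgebra ℂ (Matrix X X ℂ) :=
  Algebra.adjoin ℂ {lowerM G x D, flatM G x D, raiseM G x D}

/-- The dual adjacency algebra `M*`, the span of the `E*_i`. -/
def Mstar (G : SimpleGraph X) (x : X) (D : ℕ) : Submodule ℂ (Matrix X X ℂ) :=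
  Submodule.span ℂ (Estar G x '' Set.Icc (0 : ℤ) (D : ℤ))

/-- The graded component `T_n = Σ_i E*_{i+n} T E*_i`. -/
def Tgraded (G : SimpleGraph X) [DecidableRel G.Adj] (x : X) (D : ℕ) (n : ℤ) :
    Submodule ℂ (Matrix X X ℂ) :=
  Submodule.span ℂ
    {M | ∃ i : ℤ, ∃ S ∈ Talg G x D, M = Estar G x (i + n) * S * Estar G x i}

/-- The graded component `Q_n = Q ∩ T_n`. -/
def Qgraded (G : SimpleGraph X) [DecidableRel G.Adj] (x : X) (D : ℕ) (n : ℤ) :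
    Submodule ℂ (Matrix X X ℂ) :=
  (Subalgebra.toSubmodule (Qalg G x D)) ⊓ Tgraded G x D n

/-- `W` is an irreducible module for the algebra `A₀ ⊆ Mat_X(ℂ)` (acting on `V = ℂ^X`
by matrix-vector multiplication). -/
def IsIrredMod (A₀ : Subalgebra ℂ (Matrix X X ℂ)) (W : Submodule ℂ (X → ℂ)) : Prop :=
  (∀ S ∈ A₀, ∀ w ∈ W, S.mulVec w ∈ W) ∧ W ≠ ⊥ ∧
    ∀ W' : Submodule ℂ (X → ℂ), W' ≤ W →
      (∀ S ∈ A₀, ∀ w ∈ W', S.mulVec w ∈ W') → W' = ⊥ ∨ W' = W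

/-- The subspace `E*_i W`. -/
def Emap (G : SimpleGraph X) (x : X) (i : ℤ) (W : Submodule ℂ (X → ℂ)) :
    Submodule ℂ (X → ℂ) :=
  W.map (Estar G x i).mulVecLin

/-- The subspace `P · W` spanned by all `S w`, `S ∈ P`, `w ∈ W`. -/
def actSp (P : Submodule ℂ (Matrix X X ℂ)) (W : Submodule ℂ (X → ℂ)) :
    Submodule ℂ (X → ℂ) :=
  Submodule.span ℂ {v | ∃ S ∈ P, ∃ w ∈ W, v = S.mulVec w}

/-- The statement: `W` has endpoint `r` and diameter `d`, i.e. `E*_i W ≠ 0`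
iff `r ≤ i ≤ r + d`. -/
def HasEndpointDiam (G : SimpleGraph X) (x : X) (W : Submodule ℂ (X → ℂ))
    (r d : ℕ) : Prop :=
  ∀ i : ℤ, Emap G x i W ≠ ⊥ ↔ ((r : ℤ) ≤ i ∧ i ≤ (r : ℤ) + (d : ℤ))

/-- `σ` restricts to an isomorphism of `Q`-modules from `U` to `W`. -/
def IsQIso (G : SimpleGraph X) [DecidableRel G.Adj] (x : X) (D : ℕ)
    (U W : Submodule ℂ (X → ℂ)) (σ : (X → ℂ) →ₗ[ℂ] (X → ℂ)) : Prop :=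
  U.map σ = W ∧ (∀ u ∈ U, σ u = 0 → u = 0) ∧
    ∀ S ∈ Qalg G x D, ∀ u ∈ U, σ (S.mulVec u) = S.mulVec (σ u)

/-- `σ` restricts to an isomorphism of `T`-modules from `U` to `W`. -/
def IsTIso (G : SimpleGraph X) [DecidableRel G.Adj] (x : X) (D : ℕ)
    (U W : Submodule ℂ (X → ℂ)) (σ : (X → ℂ) →ₗ[ℂ] (X → ℂ)) : Prop :=
  U.map σ = W ∧ (∀ u ∈ U, σ u = 0 → u = 0) ∧
    ∀ S ∈ Talg G x D, ∀ u ∈ U, σ (S.mulVec u) = S.mulVec (σ u)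

/-- `σ` restricts to a quasi-isomorphism of `T`-modules from `U` to `W`,
with endpoint shift `n`. -/
def IsQuasiIso (G : SimpleGraph X) [DecidableRel G.Adj] (x : X) (D : ℕ)
    (U W : Submodule ℂ (X → ℂ)) (σ : (X → ℂ) →ₗ[ℂ] (X → ℂ)) (n : ℤ) : Prop :=
  U.map σ = W ∧ (∀ u ∈ U, σ u = 0 → u = 0) ∧
    (∀ u ∈ U, σ ((lowerM G x D).mulVec u) = (lowerM G x D).mulVec (σ u)) ∧
    (∀ u ∈ U, σ ((flatM G x D).mulVec u) = (flatM G x D).mulVec (σ u)) ∧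
    (∀ u ∈ U, σ ((raiseM G x D).mulVec u) = (raiseM G x D).mulVec (σ u)) ∧
    ∀ i : ℤ, ∀ u ∈ U, σ ((Estar G x i).mulVec u) = (Estar G x (i + n)).mulVec (σ u)

end

noncomputable section Aux

open Matrix
set_option linter.unusedSectionVars false

variable {X : Type*} [Fintype X] [DecidableEq X]
variable (G : SimpleGraph X) [DecidableRel G.Adj] (x : X) (D : ℕ)

lemma estar_mul_estar (a b : ℤ) :
    Estar G x a * Estar G x b = if a = b then Estar G x a else 0 := by
  unfold Estar
  rw [Matrix.diagonal_mul_diagonal]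
  split_ifs with h
  · subst h
    ext y z
    by_cases hyz : y = z
    · subst hyz
      rw [Matrix.diagonal_apply_eq, Matrix.diagonal_apply_eq]
      by_cases hy : (G.dist x y : ℤ) = a <;> simp [hy]
    · rw [Matrix.diagonal_apply_ne _ hyz, Matrix.diagonal_apply_ne _ hyz]
  · ext y z
    by_cases hyz : y = z
    · subst hyz
      rw [Matrix.diagonal_apply_eq, Matrix.zero_apply]
      by_cases h1 : (G.dist x y : ℤ) = a <;> by_cases h2 : (G.dist x y : ℤ) = b <;>
        simp_all
    · rw [Matrix.diagonal_apply_ne _ hyz, Matrix.zero_apply]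

lemma estar_eq_zero (hD : ∀ y, G.dist x y ≤ D) {a : ℤ} (h : a < 0 ∨ (D : ℤ) < a) :
    Estar G x a = 0 := by
  unfold Estar
  have : (fun y => if (G.dist x y : ℤ) = a then (1:ℂ) else 0) = fun _ => 0 := by
    funext y
    rw [if_neg]
    rcases h with h | h
    · intro hc; omega
    · intro hc
      have := hD y
      omega
  rw [this, Matrix.diagonal_zero]

lemma sum_estar (hD : ∀ y, G.dist x y ≤ D) :
    ∑ a ∈ Finset.range (D + 1), Estar G x (a : ℤ) = 1 := by
  ext y z
  rw [Matrix.sum_apply]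
  by_cases hyz : y = z
  · subst hyz
    rw [Matrix.one_apply_eq]
    have h1 : ∀ a ∈ Finset.range (D + 1),
        Estar G x (a : ℤ) y y = if G.dist x y = a then 1 else 0 := by
      intro a _
      unfold Estar
      rw [Matrix.diagonal_apply_eq]
      congr 1
      simp [Nat.cast_inj]
    rw [Finset.sum_congr rfl h1, Finset.sum_ite_eq (Finset.range (D+1)) (G.dist x y)]
    rw [if_pos (Finset.mem_range.mpr (Nat.lt_succ_of_le (hD y)))]
  · rw [Matrix.one_apply_ne hyz]
    apply Finset.sum_eq_zero
    intro a _
    unfold Estar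
    exact Matrix.diagonal_apply_ne _ hyz

lemma estar_mul_lower (a : ℤ) :
    Estar G x a * lowerM G x D = lowerM G x D * Estar G x (a + 1) := by
  unfold lowerM
  rw [Finset.mul_sum, Finset.sum_mul]
  refine Finset.sum_congr rfl fun i _ => ?_
  rw [← mul_assoc, ← mul_assoc, estar_mul_estar, mul_assoc, mul_assoc, mul_assoc,
    estar_mul_estar]
  by_cases h : a = (i : ℤ) - 1
  · rw [if_pos h, if_pos (by omega), h]
  · rw [if_neg h, if_neg (by omega), zero_mul, mul_zero, mul_zero]

lemma estar_mul_flat (a : ℤ) :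
    Estar G x a * flatM G x D = flatM G x D * Estar G x a := by
  unfold flatM
  rw [Finset.mul_sum, Finset.sum_mul]
  refine Finset.sum_congr rfl fun i _ => ?_
  rw [← mul_assoc, ← mul_assoc, estar_mul_estar, mul_assoc, mul_assoc, mul_assoc,
    estar_mul_estar]
  by_cases h : a = (i : ℤ)
  · rw [if_pos h, if_pos h.symm, h]
  · rw [if_neg h, if_neg (fun hc => h hc.symm), zero_mul, mul_zero, mul_zero]

lemma estar_mul_raise (a : ℤ) :
    Estar G x a * raiseM G x D = raiseM G x D * Estar G x (a - 1) := by
  unfold raiseM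
  rw [Finset.mul_sum, Finset.sum_mul]
  refine Finset.sum_congr rfl fun i _ => ?_
  rw [← mul_assoc, ← mul_assoc, estar_mul_estar, mul_assoc, mul_assoc, mul_assoc,
    estar_mul_estar]
  by_cases h : a = (i : ℤ) + 1
  · rw [if_pos h, if_pos (by omega), h]
  · rw [if_neg h, if_neg (by omega), zero_mul, mul_zero, mul_zero]

lemma triple_apply (b c : ℤ) (y z : X) :
    (Estar G x b * adjMat G * Estar G x c) y z =
      if (G.dist x y : ℤ) = b ∧ (G.dist x z : ℤ) = c ∧ G.Adj y z then 1 else 0 := by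
  unfold Estar adjMat
  rw [Matrix.mul_diagonal, Matrix.diagonal_mul, Matrix.of_apply]
  by_cases h1 : (G.dist x y : ℤ) = b <;> by_cases h2 : (G.dist x z : ℤ) = c <;>
    by_cases h3 : G.Adj y z <;> simp [h1, h2, h3]

lemma lowerM_apply (hD : ∀ y, G.dist x y ≤ D) (y z : X) :
    lowerM G x D y z =
      if (G.dist x z : ℤ) = (G.dist x y : ℤ) + 1 ∧ G.Adj y z then 1 else 0 := by
  unfold lowerM
  rw [Matrix.sum_apply]
  have key : ∀ i ∈ Finset.Icc 1 D, (Estar G x ((i:ℤ) - 1) * adjMat G * Estar G x i) y z =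
      if (G.dist x y : ℤ) = (i:ℤ) - 1 ∧ (G.dist x z : ℤ) = i ∧ G.Adj y z then 1 else 0 :=
    fun i _ => triple_apply G x ((i:ℤ)-1) i y z
  rw [Finset.sum_congr rfl key]
  by_cases h : (G.dist x z : ℤ) = (G.dist x y : ℤ) + 1 ∧ G.Adj y z
  · rw [if_pos h]
    rw [Finset.sum_eq_single_of_mem (G.dist x z)]
    · rw [if_pos ⟨by omega, by exact_mod_cast rfl, h.2⟩]
    · exact Finset.mem_Icc.mpr ⟨by omega, hD z⟩
    · intro i _ hi
      rw [if_neg]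
      rintro ⟨-, h2, -⟩
      exact hi (by exact_mod_cast h2.symm)
  · rw [if_neg h]
    apply Finset.sum_eq_zero
    intro i _
    rw [if_neg]
    rintro ⟨h1, h2, h3⟩
    exact h ⟨by omega, h3⟩

lemma flatM_apply (hD : ∀ y, G.dist x y ≤ D) (y z : X) :
    flatM G x D y z =
      if (G.dist x z : ℤ) = (G.dist x y : ℤ) ∧ G.Adj y z then 1 else 0 := by
  unfold flatM
  rw [Matrix.sum_apply]
  have key : ∀ i ∈ Finset.range (D+1), (Estar G x i * adjMat G * Estar G x i) y z =
      if (G.dist x y : ℤ) = (i:ℤ) ∧ (G.dist x z : ℤ) = i ∧ G.Adj y z then 1 else 0 :=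
    fun i _ => triple_apply G x i i y z
  rw [Finset.sum_congr rfl key]
  by_cases h : (G.dist x z : ℤ) = (G.dist x y : ℤ) ∧ G.Adj y z
  · rw [if_pos h]
    rw [Finset.sum_eq_single_of_mem (G.dist x z)]
    · rw [if_pos ⟨by omega, by exact_mod_cast rfl, h.2⟩]
    · exact Finset.mem_range.mpr (Nat.lt_succ_of_le (hD z))
    · intro i _ hi
      rw [if_neg]
      rintro ⟨-, h2, -⟩
      exact hi (by exact_mod_cast h2.symm)
  · rw [if_neg h]
    apply Finset.sum_eq_zero
    intro i _
    rw [if_neg]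
    rintro ⟨h1, h2, h3⟩
    exact h ⟨by omega, h3⟩

lemma raiseM_apply (hD : ∀ y, G.dist x y ≤ D) (y z : X) :
    raiseM G x D y z =
      if (G.dist x y : ℤ) = (G.dist x z : ℤ) + 1 ∧ G.Adj y z then 1 else 0 := by
  unfold raiseM
  rw [Matrix.sum_apply]
  have key : ∀ i ∈ Finset.range D, (Estar G x ((i:ℤ)+1) * adjMat G * Estar G x i) y z =
      if (G.dist x y : ℤ) = (i:ℤ) + 1 ∧ (G.dist x z : ℤ) = i ∧ G.Adj y z then 1 else 0 :=
    fun i _ => triple_apply G x ((i:ℤ)+1) i y z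
  rw [Finset.sum_congr rfl key]
  by_cases h : (G.dist x y : ℤ) = (G.dist x z : ℤ) + 1 ∧ G.Adj y z
  · rw [if_pos h]
    rw [Finset.sum_eq_single_of_mem (G.dist x z)]
    · rw [if_pos ⟨by omega, by exact_mod_cast rfl, h.2⟩]
    · refine Finset.mem_range.mpr ?_
      have := hD y
      omega
    · intro i _ hi
      rw [if_neg]
      rintro ⟨-, h2, -⟩
      exact hi (by exact_mod_cast h2.symm)
  · rw [if_neg h]
    apply Finset.sum_eq_zero
    intro i _
    rw [if_neg]
    rintro ⟨h1, h2, h3⟩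
    exact h ⟨by omega, h3⟩

lemma adjMat_eq_LFR (hG : G.Connected) (hD : ∀ y, G.dist x y ≤ D) :
    adjMat G = lowerM G x D + flatM G x D + raiseM G x D := by
  ext y z
  rw [Matrix.add_apply, Matrix.add_apply, lowerM_apply G x D hD, flatM_apply G x D hD,
    raiseM_apply G x D hD]
  unfold adjMat
  rw [Matrix.of_apply]
  by_cases h3 : G.Adj y z
  · have hd1 : G.dist y z = 1 := SimpleGraph.dist_eq_one_iff_adj.mpr h3
    have t1 : G.dist x z ≤ G.dist x y + 1 := by
      have := hG.dist_triangle (u := x) (v := y) (w := z)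
      omega
    have t2 : G.dist x y ≤ G.dist x z + 1 := by
      have := hG.dist_triangle (u := x) (v := z) (w := y)
      have hd2 : G.dist z y = 1 := SimpleGraph.dist_eq_one_iff_adj.mpr h3.symm
      omega
    rw [if_pos h3]
    have dy := G.dist x y
    rcases lt_trichotomy (G.dist x z) (G.dist x y) with hh | hh | hh
    · rw [if_neg (by omega), if_neg (by omega), if_pos ⟨by omega, h3⟩]
      ring
    · rw [if_neg (by omega), if_pos ⟨by omega, h3⟩, if_neg (by omega)]
      ring
    · rw [if_pos ⟨by omega, h3⟩, if_neg (by omega), if_neg (by omega)]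
      ring
  · rw [if_neg h3, if_neg (by tauto), if_neg (by tauto), if_neg (by tauto)]
    ring

lemma adjMat_mem_T : adjMat G ∈ Talg G x D :=
  Algebra.subset_adjoin (Set.mem_insert _ _)

lemma estar_mem_T (hD : ∀ y, G.dist x y ≤ D) (a : ℤ) : Estar G x a ∈ Talg G x D := by
  by_cases h : 0 ≤ a ∧ a ≤ (D : ℤ)
  · exact Algebra.subset_adjoin (Set.mem_insert_iff.mpr (Or.inr ⟨a, ⟨h.1, h.2⟩, rfl⟩))
  · rw [estar_eq_zero G x D hD (by omega)]
    exact zero_mem _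

lemma lowerM_mem_T (hD : ∀ y, G.dist x y ≤ D) : lowerM G x D ∈ Talg G x D :=
  sum_mem fun i _ => mul_mem (mul_mem (estar_mem_T G x D hD _) (adjMat_mem_T G x D))
    (estar_mem_T G x D hD _)

lemma flatM_mem_T (hD : ∀ y, G.dist x y ≤ D) : flatM G x D ∈ Talg G x D :=
  sum_mem fun i _ => mul_mem (mul_mem (estar_mem_T G x D hD _) (adjMat_mem_T G x D))
    (estar_mem_T G x D hD _)

lemma raiseM_mem_T (hD : ∀ y, G.dist x y ≤ D) : raiseM G x D ∈ Talg G x D :=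
  sum_mem fun i _ => mul_mem (mul_mem (estar_mem_T G x D hD _) (adjMat_mem_T G x D))
    (estar_mem_T G x D hD _)

lemma Q_le_T (hD : ∀ y, G.dist x y ≤ D) : Qalg G x D ≤ Talg G x D := by
  apply Algebra.adjoin_le
  rintro M hM
  rcases hM with rfl | rfl | rfl
  · exact lowerM_mem_T G x D hD
  · exact flatM_mem_T G x D hD
  · exact raiseM_mem_T G x D hD

lemma lowerM_mem_Q : lowerM G x D ∈ Qalg G x D :=
  Algebra.subset_adjoin (by left; rfl)

lemma flatM_mem_Q : flatM G x D ∈ Qalg G x D :=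
  Algebra.subset_adjoin (by right; left; rfl)

lemma raiseM_mem_Q : raiseM G x D ∈ Qalg G x D :=
  Algebra.subset_adjoin (by right; right; rfl)

lemma adjMat_mem_Q (hG : G.Connected) (hD : ∀ y, G.dist x y ≤ D) :
    adjMat G ∈ Qalg G x D := by
  rw [adjMat_eq_LFR G x D hG hD]
  exact add_mem (add_mem (lowerM_mem_Q G x D) (flatM_mem_Q G x D)) (raiseM_mem_Q G x D)

/-- Words in `L`, `F`, `R` with their degree. -/
inductive IsWord (G : SimpleGraph X) [DecidableRel G.Adj] (x : X) (D : ℕ) :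
    ℤ → Matrix X X ℂ → Prop
  | one : IsWord G x D 0 1
  | lower {n M} : IsWord G x D n M → IsWord G x D (n - 1) (lowerM G x D * M)
  | flat {n M} : IsWord G x D n M → IsWord G x D n (flatM G x D * M)
  | raise {n M} : IsWord G x D n M → IsWord G x D (n + 1) (raiseM G x D * M)

lemma IsWord.mem_Q {n : ℤ} {M : Matrix X X ℂ} (h : IsWord G x D n M) :
    M ∈ Qalg G x D := by
  induction h with
  | one => exact one_mem _
  | lower _ ih => exact mul_mem (lowerM_mem_Q G x D) ih
  | flat _ ih => exact mul_mem (flatM_mem_Q G x D) ih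
  | raise _ ih => exact mul_mem (raiseM_mem_Q G x D) ih

lemma IsWord.comm {n : ℤ} {M : Matrix X X ℂ} (h : IsWord G x D n M) (a : ℤ) :
    Estar G x a * M = M * Estar G x (a - n) := by
  induction h generalizing a with
  | one => rw [one_mul, mul_one, sub_zero]
  | @lower m N _ ih =>
      rw [← mul_assoc, estar_mul_lower, mul_assoc, ih (a+1), ← mul_assoc]
      congr 2
      ring
  | @flat m N _ ih =>
      rw [← mul_assoc, estar_mul_flat, mul_assoc, ih a, ← mul_assoc]
  | @raise m N _ ih =>
      rw [← mul_assoc, estar_mul_raise, mul_assoc, ih (a-1), ← mul_assoc]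
      congr 2
      ring

lemma IsWord.mul {n m : ℤ} {M N : Matrix X X ℂ} (hM : IsWord G x D n M)
    (hN : IsWord G x D m N) : IsWord G x D (n + m) (M * N) := by
  induction hM with
  | one => rw [one_mul, zero_add]; exact hN
  | @lower k P hP ih =>
      have e : k - 1 + m = k + m - 1 := by ring
      rw [e, mul_assoc]
      exact ih.lower
  | @flat k P hP ih =>
      rw [mul_assoc]
      exact IsWord.flat ih
  | @raise k P hP ih =>
      have e : k + 1 + m = k + m + 1 := by ring
      rw [e, mul_assoc]
      exact ih.raise

/-- The span of all words. -/
def spanW (G : SimpleGraph X) [DecidableRel G.Adj] (x : X) (D : ℕ) :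
    Submodule ℂ (Matrix X X ℂ) :=
  Submodule.span ℂ {M | ∃ n : ℤ, IsWord G x D n M}

lemma spanW_mul {S S' : Matrix X X ℂ} (hS : S ∈ spanW G x D) (hS' : S' ∈ spanW G x D) :
    S * S' ∈ spanW G x D := by
  induction hS using Submodule.span_induction with
  | mem M hM =>
      induction hS' using Submodule.span_induction with
      | mem N hN =>
          obtain ⟨n, hn⟩ := hM
          obtain ⟨m, hm⟩ := hN
          exact Submodule.subset_span ⟨n + m, hn.mul G x D hm⟩
      | zero => rw [mul_zero]; exact zero_mem _
      | add a b _ _ iha ihb => rw [mul_add]; exact add_mem iha ihb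
      | smul c a _ iha => rw [mul_smul_comm]; exact Submodule.smul_mem _ _ iha
  | zero => rw [zero_mul]; exact zero_mem _
  | add a b _ _ iha ihb => rw [add_mul]; exact add_mem iha ihb
  | smul c a _ iha => rw [smul_mul_assoc]; exact Submodule.smul_mem _ _ iha

lemma Q_le_spanW {S : Matrix X X ℂ} (hS : S ∈ Qalg G x D) : S ∈ spanW G x D := by
  induction hS using Algebra.adjoin_induction with
  | mem M hM =>
      rcases hM with rfl | rfl | rfl
      · have h := IsWord.one.lower (G := G) (x := x) (D := D)
        rw [mul_one] at h
        exact Submodule.subset_span ⟨_, h⟩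
      · have h := IsWord.one.flat (G := G) (x := x) (D := D)
        rw [mul_one] at h
        exact Submodule.subset_span ⟨_, h⟩
      · have h := IsWord.one.raise (G := G) (x := x) (D := D)
        rw [mul_one] at h
        exact Submodule.subset_span ⟨_, h⟩
  | algebraMap r =>
      rw [Algebra.algebraMap_eq_smul_one]
      exact Submodule.smul_mem _ _ (Submodule.subset_span ⟨0, IsWord.one⟩)
  | add a b _ _ iha ihb => exact add_mem iha ihb
  | mul a b _ _ iha ihb => exact spanW_mul G x D iha ihb

/-- A subspace invariant under `A` and all `E*_a` is invariant under `T`. -/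
lemma talg_invariant (V : Submodule ℂ (X → ℂ))
    (hA : ∀ v ∈ V, (adjMat G).mulVec v ∈ V)
    (hE : ∀ a : ℤ, ∀ v ∈ V, (Estar G x a).mulVec v ∈ V) :
    ∀ S ∈ Talg G x D, ∀ v ∈ V, S.mulVec v ∈ V := by
  intro S hS
  induction hS using Algebra.adjoin_induction with
  | mem M hM =>
      rcases hM with rfl | ⟨a, _, rfl⟩
      · exact hA
      · exact hE a
  | algebraMap r =>
      intro v hv
      rw [Algebra.algebraMap_eq_smul_one, Matrix.smul_mulVec, Matrix.one_mulVec]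
      exact Submodule.smul_mem _ _ hv
  | add a b _ _ iha ihb =>
      intro v hv
      rw [Matrix.add_mulVec]
      exact add_mem (iha v hv) (ihb v hv)
  | mul a b _ _ iha ihb =>
      intro v hv
      rw [← Matrix.mulVec_mulVec]
      exact iha _ (ihb v hv)

lemma sum_mulVec' {ι : Type*} (s : Finset ι) (f : ι → Matrix X X ℂ) (v : X → ℂ) :
    (∑ i ∈ s, f i).mulVec v = ∑ i ∈ s, (f i).mulVec v := by
  classical
  induction s using Finset.induction with
  | empty => simp [Matrix.zero_mulVec]
  | @insert a s h ih => rw [Finset.sum_insert h, Finset.sum_insert h, Matrix.add_mulVec, ih]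

lemma estar_estar_mulVec (a b : ℤ) (v : X → ℂ) :
    (Estar G x a).mulVec ((Estar G x b).mulVec v) =
      if a = b then (Estar G x b).mulVec v else 0 := by
  rw [Matrix.mulVec_mulVec, estar_mul_estar]
  split_ifs with h
  · rw [h]
  · rw [Matrix.zero_mulVec]

lemma mem_emap_iff {a : ℤ} {U : Submodule ℂ (X → ℂ)} {v : X → ℂ} :
    v ∈ Emap G x a U ↔ ∃ u ∈ U, (Estar G x a).mulVec u = v := by
  unfold Emap
  simp only [Submodule.mem_map, Matrix.mulVecLin_apply]

lemma emap_estar_mulVec {b : ℤ} {U : Submodule ℂ (X → ℂ)} {w : X → ℂ}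
    (hw : w ∈ Emap G x b U) (a : ℤ) :
    (Estar G x a).mulVec w = if a = b then w else 0 := by
  obtain ⟨u, _, rfl⟩ := (mem_emap_iff G x).mp hw
  exact estar_estar_mulVec G x a b u

lemma emap_eq_bot_iff {a : ℤ} {U : Submodule ℂ (X → ℂ)} :
    Emap G x a U = ⊥ ↔ ∀ u ∈ U, (Estar G x a).mulVec u = 0 := by
  rw [Submodule.eq_bot_iff]
  constructor
  · intro h u hu
    exact h _ ((mem_emap_iff G x).mpr ⟨u, hu, rfl⟩)
  · rintro h v hv
    obtain ⟨u, hu, rfl⟩ := (mem_emap_iff G x).mp hv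
    exact h u hu

lemma emap_le {a : ℤ} {U : Submodule ℂ (X → ℂ)} (hD : ∀ y, G.dist x y ≤ D)
    (hT : ∀ S ∈ Talg G x D, ∀ v ∈ U, S.mulVec v ∈ U) : Emap G x a U ≤ U := by
  rintro v hv
  obtain ⟨u, hu, rfl⟩ := (mem_emap_iff G x).mp hv
  exact hT _ (estar_mem_T G x D hD a) u hu

lemma emap_ne_bot_le {a : ℤ} {U : Submodule ℂ (X → ℂ)} (hD : ∀ y, G.dist x y ≤ D)
    (h : Emap G x a U ≠ ⊥) : 0 ≤ a ∧ a ≤ (D : ℤ) := by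
  by_contra hc
  apply h
  rw [emap_eq_bot_iff]
  intro u _
  rw [estar_eq_zero G x D hD (by omega), Matrix.zero_mulVec]

lemma IsWord.mulVec_comm {n : ℤ} {M : Matrix X X ℂ} (h : IsWord G x D n M) (a : ℤ)
    (v : X → ℂ) :
    (Estar G x a).mulVec (M.mulVec v) = M.mulVec ((Estar G x (a - n)).mulVec v) := by
  rw [Matrix.mulVec_mulVec, Matrix.mulVec_mulVec, h.comm G x D a]

lemma estar_sum_decomp (hD : ∀ y, G.dist x y ≤ D) (v : X → ℂ) :
    ∑ a ∈ Finset.range (D + 1), (Estar G x (a : ℤ)).mulVec v = v := by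
  rw [← sum_mulVec', sum_estar G x D hD, Matrix.one_mulVec]

/-- Characterization of the lowest component `E*_r U` of an irreducible `T`-module:
it consists of the vectors of `U` killed by all words of negative degree. -/
lemma lowest_char (hG : G.Connected) (hD : ∀ y, G.dist x y ≤ D)
    (U : Submodule ℂ (X → ℂ)) (hU : IsIrredMod (Talg G x D) U)
    (r dU : ℕ) (hrU : HasEndpointDiam G x U r dU) (u : X → ℂ) :
    u ∈ Emap G x r U ↔
      (u ∈ U ∧ ∀ n : ℤ, n < 0 → ∀ M, IsWord G x D n M → M.mulVec u = 0) := by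
  have hr_ne : Emap G x (r : ℤ) U ≠ ⊥ := (hrU (r : ℤ)).mpr ⟨le_refl _, by omega⟩
  constructor
  · intro hu
    obtain ⟨u', hu', rfl⟩ := (mem_emap_iff G x).mp hu
    refine ⟨hU.1 _ (estar_mem_T G x D hD _) u' hu', ?_⟩
    intro n hn M hM
    have h1 : M.mulVec ((Estar G x (r : ℤ)).mulVec u') =
        (Estar G x ((r : ℤ) + n)).mulVec (M.mulVec u') := by
      rw [hM.mulVec_comm G x D ((r : ℤ) + n)]
      congr 2
      ring
    rw [h1]
    have hbot : Emap G x ((r : ℤ) + n) U = ⊥ := by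
      by_contra hc
      have := (hrU ((r : ℤ) + n)).mp hc
      omega
    exact (emap_eq_bot_iff G x).mp hbot _ (hU.1 _ (Q_le_T G x D hD hM.mem_Q) u' hu')
  · rintro ⟨huU, hkill⟩
    -- All higher components of `u` vanish.
    have key : ∀ j : ℤ, 0 < j → (Estar G x ((r : ℤ) + j)).mulVec u = 0 := by
      intro j hj
      by_contra huj
      set uj := (Estar G x ((r : ℤ) + j)).mulVec u with huj_def
      have hujU : uj ∈ U := hU.1 _ (estar_mem_T G x D hD _) u huU
      have hE' : ∀ b : ℤ, (Estar G x b).mulVec uj = if b = (r : ℤ) + j then uj else 0 := by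
        intro b
        rw [huj_def]
        exact estar_estar_mulVec G x b _ u
      set V : Submodule ℂ (X → ℂ) :=
        Submodule.span ℂ {v | ∃ S ∈ Qalg G x D, v = S.mulVec uj} with hV
      have hVle : V ≤ U := by
        rw [hV, Submodule.span_le]
        rintro v ⟨S, hS, rfl⟩
        exact hU.1 _ (Q_le_T G x D hD hS) _ hujU
      have hVinv : ∀ S ∈ Talg G x D, ∀ v ∈ V, S.mulVec v ∈ V := by
        apply talg_invariant
        · intro v hv
          induction hv using Submodule.span_induction with
          | mem w hw =>
              obtain ⟨S, hS, rfl⟩ := hw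
              rw [Matrix.mulVec_mulVec]
              exact Submodule.subset_span ⟨_, mul_mem (adjMat_mem_Q G x D hG hD) hS, rfl⟩
          | zero => rw [Matrix.mulVec_zero]; exact zero_mem _
          | add a b _ _ iha ihb => rw [Matrix.mulVec_add]; exact add_mem iha ihb
          | smul c a _ iha => rw [Matrix.mulVec_smul]; exact Submodule.smul_mem _ _ iha
        · intro a v hv
          induction hv using Submodule.span_induction with
          | mem w hw =>
              obtain ⟨S, hS, rfl⟩ := hw
              have hSW : S ∈ spanW G x D := Q_le_spanW G x D hS
              clear hS
              induction hSW using Submodule.span_induction with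
              | mem M hM =>
                  obtain ⟨n, hn⟩ := hM
                  rw [hn.mulVec_comm G x D a, hE' (a - n)]
                  split_ifs with h
                  · exact Submodule.subset_span ⟨_, hn.mem_Q G x D, rfl⟩
                  · rw [Matrix.mulVec_zero]; exact zero_mem _
              | zero =>
                  rw [Matrix.zero_mulVec, Matrix.mulVec_zero]; exact zero_mem _
              | add s t hs ht ihs iht =>
                  rw [Matrix.add_mulVec, Matrix.mulVec_add]; exact add_mem ihs iht
              | smul c s hs ihs =>
                  rw [Matrix.smul_mulVec, Matrix.mulVec_smul]
                  exact Submodule.smul_mem _ _ ihs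
          | zero => rw [Matrix.mulVec_zero]; exact zero_mem _
          | add a' b _ _ iha ihb => rw [Matrix.mulVec_add]; exact add_mem iha ihb
          | smul c a' _ iha => rw [Matrix.mulVec_smul]; exact Submodule.smul_mem _ _ iha
      have hVne : V ≠ ⊥ := by
        rw [Submodule.ne_bot_iff]
        refine ⟨uj, Submodule.subset_span ⟨1, one_mem _, (Matrix.one_mulVec _).symm⟩, huj⟩
      have hVU : V = U := (hU.2.2 V hVle hVinv).resolve_left hVne
      -- every element of `V = U` is killed by `E*_r`.
      have hEr : ∀ v ∈ V, (Estar G x (r : ℤ)).mulVec v = 0 := by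
        intro v hv
        induction hv using Submodule.span_induction with
        | mem w hw =>
            obtain ⟨S, hS, rfl⟩ := hw
            have hSW : S ∈ spanW G x D := Q_le_spanW G x D hS
            clear hS
            induction hSW using Submodule.span_induction with
            | mem M hM =>
                obtain ⟨n, hn⟩ := hM
                rw [hn.mulVec_comm G x D (r : ℤ), hE' ((r : ℤ) - n)]
                split_ifs with h
                · have h0 : M.mulVec u = 0 := hkill n (by omega) M hn
                  rw [huj_def, show ((r : ℤ) + j) = ((r : ℤ) + j + n) - n by ring,
                    ← hn.mulVec_comm G x D ((r : ℤ) + j + n), h0, Matrix.mulVec_zero]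
                · rw [Matrix.mulVec_zero]
            | zero => rw [Matrix.zero_mulVec, Matrix.mulVec_zero]
            | add s t hs ht ihs iht =>
                rw [Matrix.add_mulVec, Matrix.mulVec_add, ihs, iht, add_zero]
            | smul c s hs ihs =>
                rw [Matrix.smul_mulVec, Matrix.mulVec_smul, ihs, smul_zero]
        | zero => rw [Matrix.mulVec_zero]
        | add a b _ _ iha ihb => rw [Matrix.mulVec_add, iha, ihb, add_zero]
        | smul c a _ iha => rw [Matrix.mulVec_smul, iha, smul_zero]
      apply hr_ne
      rw [emap_eq_bot_iff]
      intro v hv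
      exact hEr v (hVU ▸ hv)
    -- other components also vanish and `u = E*_r u`.
    have hrD : (0 : ℤ) ≤ (r : ℤ) ∧ (r : ℤ) ≤ (D : ℤ) := emap_ne_bot_le G x D hD hr_ne
    have hdec := estar_sum_decomp G x D hD u
    have hzero : ∀ a ∈ Finset.range (D + 1), a ≠ r →
        (Estar G x (a : ℤ)).mulVec u = 0 := by
      intro a _ ha
      rcases lt_or_gt_of_ne ha with h | h
      · have hbot : Emap G x (a : ℤ) U = ⊥ := by
          by_contra hc
          have := (hrU (a : ℤ)).mp hc
          omega
        exact (emap_eq_bot_iff G x).mp hbot _ huU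
      · have := key ((a : ℤ) - r) (by omega)
        rw [show (r : ℤ) + ((a : ℤ) - r) = (a : ℤ) by ring] at this
        exact this
    have hmem : r ∈ Finset.range (D + 1) := Finset.mem_range.mpr (by omega)
    have : (Estar G x (r : ℤ)).mulVec u = u := by
      rw [← hdec]
      rw [Finset.sum_eq_single_of_mem r hmem hzero, estar_estar_mulVec, if_pos rfl]
    exact (mem_emap_iff G x).mpr ⟨u, huU, this⟩

/-- Each component of an irreducible `T`-module is obtained from the lowest one
by applying words of the appropriate degree. -/
lemma comp_eq (hG : G.Connected) (hD : ∀ y, G.dist x y ≤ D)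
    (U : Submodule ℂ (X → ℂ)) (hU : IsIrredMod (Talg G x D) U)
    (r dU : ℕ) (hrU : HasEndpointDiam G x U r dU) (i : ℤ) :
    Emap G x ((r : ℤ) + i) U =
      Submodule.span ℂ
        {v | ∃ M, IsWord G x D i M ∧ ∃ w ∈ Emap G x r U, v = M.mulVec w} := by
  have hr_ne : Emap G x (r : ℤ) U ≠ ⊥ := (hrU (r : ℤ)).mpr ⟨le_refl _, by omega⟩
  have hE0 : ∀ w ∈ Emap G x (r : ℤ) U, ∀ b : ℤ,
      (Estar G x b).mulVec w = if b = (r : ℤ) then w else 0 := fun w hw b =>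
    emap_estar_mulVec G x hw b
  have hEle : Emap G x (r : ℤ) U ≤ U := emap_le G x D hD hU.1
  set V : Submodule ℂ (X → ℂ) :=
    Submodule.span ℂ
      {v | ∃ n : ℤ, ∃ M, IsWord G x D n M ∧ ∃ w ∈ Emap G x r U, v = M.mulVec w} with hV
  have hVle : V ≤ U := by
    rw [hV, Submodule.span_le]
    rintro v ⟨n, M, hM, w, hw, rfl⟩
    exact hU.1 _ (Q_le_T G x D hD (hM.mem_Q G x D)) _ (hEle hw)
  have hVinv : ∀ S ∈ Talg G x D, ∀ v ∈ V, S.mulVec v ∈ V := by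
    apply talg_invariant
    · intro v hv
      induction hv using Submodule.span_induction with
      | mem w hw =>
          obtain ⟨n, M, hM, w', hw', rfl⟩ := hw
          rw [Matrix.mulVec_mulVec, adjMat_eq_LFR G x D hG hD, add_mul, add_mul,
            Matrix.add_mulVec, Matrix.add_mulVec]
          refine add_mem (add_mem ?_ ?_) ?_
          · exact Submodule.subset_span ⟨n - 1, _, hM.lower, w', hw', rfl⟩
          · exact Submodule.subset_span ⟨n, _, hM.flat, w', hw', rfl⟩
          · exact Submodule.subset_span ⟨n + 1, _, hM.raise, w', hw', rfl⟩
      | zero => rw [Matrix.mulVec_zero]; exact zero_mem _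
      | add a b _ _ iha ihb => rw [Matrix.mulVec_add]; exact add_mem iha ihb
      | smul c a _ iha => rw [Matrix.mulVec_smul]; exact Submodule.smul_mem _ _ iha
    · intro a v hv
      induction hv using Submodule.span_induction with
      | mem w hw =>
          obtain ⟨n, M, hM, w', hw', rfl⟩ := hw
          rw [hM.mulVec_comm G x D a, hE0 w' hw' (a - n)]
          split_ifs with h
          · exact Submodule.subset_span ⟨n, M, hM, w', hw', rfl⟩
          · rw [Matrix.mulVec_zero]; exact zero_mem _
      | zero => rw [Matrix.mulVec_zero]; exact zero_mem _
      | add a' b _ _ iha ihb => rw [Matrix.mulVec_add]; exact add_mem iha ihb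
      | smul c a' _ iha => rw [Matrix.mulVec_smul]; exact Submodule.smul_mem _ _ iha
  have hVne : V ≠ ⊥ := by
    obtain ⟨w0, hw0, hw0ne⟩ := Submodule.ne_bot_iff _ |>.mp hr_ne
    rw [Submodule.ne_bot_iff]
    exact ⟨w0, Submodule.subset_span ⟨0, 1, IsWord.one, w0, hw0, (Matrix.one_mulVec _).symm⟩,
      hw0ne⟩
  have hVU : V = U := (hU.2.2 V hVle hVinv).resolve_left hVne
  apply le_antisymm
  · rintro v hv
    obtain ⟨u, hu, rfl⟩ := (mem_emap_iff G x).mp hv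
    have huV : u ∈ V := hVU ▸ hu
    clear hv hu
    induction huV using Submodule.span_induction with
    | mem w hw =>
        obtain ⟨n, M, hM, w', hw', rfl⟩ := hw
        rw [hM.mulVec_comm G x D ((r : ℤ) + i), hE0 w' hw' ((r : ℤ) + i - n)]
        split_ifs with h
        · exact Submodule.subset_span ⟨M, by rwa [show n = i by omega] at hM, w', hw', rfl⟩
        · rw [Matrix.mulVec_zero]; exact zero_mem _
    | zero => rw [Matrix.mulVec_zero]; exact zero_mem _
    | add a b _ _ iha ihb => rw [Matrix.mulVec_add]; exact add_mem iha ihb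
    | smul c a _ iha => rw [Matrix.mulVec_smul]; exact Submodule.smul_mem _ _ iha
  · rw [Submodule.span_le]
    rintro v ⟨M, hM, w, hw, rfl⟩
    refine (mem_emap_iff G x).mpr ⟨M.mulVec w, hU.1 _ (Q_le_T G x D hD (hM.mem_Q G x D)) _
      (hEle hw), ?_⟩
    rw [hM.mulVec_comm G x D ((r : ℤ) + i), show (r : ℤ) + i - i = (r : ℤ) by ring,
      hE0 w hw (r : ℤ), if_pos rfl]


end Aux

theorem stmt16 {X : Type*} [Fintype X] [DecidableEq X]
    (G : SimpleGraph X) [DecidableRel G.Adj] (hG : G.Connected) (x : X) (D : ℕ)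
    (hD : ∀ y, G.dist x y ≤ D) (hD2 : ∃ y, G.dist x y = D)
    (U W : Submodule ℂ (X → ℂ))
    (hU : IsIrredMod (Talg G x D) U) (hW : IsIrredMod (Talg G x D) W)
    (r dU r' dW : ℕ)
    (hrU : HasEndpointDiam G x U r dU) (hrW : HasEndpointDiam G x W r' dW)
    (σ : (X → ℂ) →ₗ[ℂ] (X → ℂ)) (hσ : IsQIso G x D U W σ) :
    dU = dW ∧
    ∀ i : ℕ, i ≤ dU →
      (Emap G x ((r : ℤ) + (i : ℤ)) U).map σ = Emap G x ((r' : ℤ) + (i : ℤ)) W := by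
  obtain ⟨hmap, hinj, hcomm⟩ := hσ
  -- `σ` maps the lowest component of `U` onto the lowest component of `W`.
  have hlow : (Emap G x (r : ℤ) U).map σ = Emap G x (r' : ℤ) W := by
    apply le_antisymm
    · rintro w hw
      obtain ⟨u, hu, rfl⟩ := Submodule.mem_map.mp hw
      rw [lowest_char G x D hG hD U hU r dU hrU] at hu
      obtain ⟨huU, hk⟩ := hu
      rw [lowest_char G x D hG hD W hW r' dW hrW]
      refine ⟨hmap ▸ Submodule.mem_map_of_mem huU, fun n hn M hM => ?_⟩
      rw [← hcomm M (hM.mem_Q G x D) u huU, hk n hn M hM, map_zero]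
    · rintro w hw
      rw [lowest_char G x D hG hD W hW r' dW hrW] at hw
      obtain ⟨hwW, hk⟩ := hw
      rw [← hmap] at hwW
      obtain ⟨u, huU, rfl⟩ := Submodule.mem_map.mp hwW
      refine Submodule.mem_map_of_mem ?_
      rw [lowest_char G x D hG hD U hU r dU hrU]
      refine ⟨huU, fun n hn M hM => ?_⟩
      apply hinj _ (hU.1 _ (Q_le_T G x D hD (hM.mem_Q G x D)) u huU)
      rw [hcomm M (hM.mem_Q G x D) u huU, hk n hn M hM]
  -- `σ` maps each component of `U` onto the corresponding component of `W`.
  have hUle : Emap G x (r : ℤ) U ≤ U := emap_le G x D hD hU.1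
  have hcompmap : ∀ i : ℤ,
      (Emap G x ((r : ℤ) + i) U).map σ = Emap G x ((r' : ℤ) + i) W := by
    intro i
    rw [comp_eq G x D hG hD U hU r dU hrU i, comp_eq G x D hG hD W hW r' dW hrW i,
      Submodule.map_span]
    congr 1
    ext v
    constructor
    · rintro ⟨v', ⟨M, hM, w, hw, rfl⟩, rfl⟩
      refine ⟨M, hM, σ w, ?_, ?_⟩
      · rw [← hlow]
        exact Submodule.mem_map_of_mem hw
      · rw [hcomm M (hM.mem_Q G x D) w (hUle hw)]
    · rintro ⟨M, hM, w, hw, rfl⟩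
      rw [← hlow] at hw
      obtain ⟨w', hw', rfl⟩ := Submodule.mem_map.mp hw
      exact ⟨M.mulVec w', ⟨M, hM, w', hw', rfl⟩, hcomm M (hM.mem_Q G x D) w' (hUle hw')⟩
  -- the components of `U` and `W` vanish simultaneously.
  have hbots : ∀ i : ℤ,
      (Emap G x ((r : ℤ) + i) U = ⊥ ↔ Emap G x ((r' : ℤ) + i) W = ⊥) := by
    intro i
    rw [← hcompmap i]
    constructor
    · intro h
      rw [h, Submodule.map_bot]
    · intro h
      rw [Submodule.eq_bot_iff] at h ⊢
      intro u hu
      exact hinj u (emap_le G x D hD hU.1 hu) (h (σ u) (Submodule.mem_map_of_mem hu))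
  have hdd : dU = dW := by
    have h1 : Emap G x ((r : ℤ) + (dU : ℤ)) U ≠ ⊥ := (hrU _).mpr ⟨by omega, by omega⟩
    have h2 : Emap G x ((r' : ℤ) + (dU : ℤ)) W ≠ ⊥ := fun hc =>
      h1 ((hbots (dU : ℤ)).mpr hc)
    have h3 : Emap G x ((r' : ℤ) + (dW : ℤ)) W ≠ ⊥ := (hrW _).mpr ⟨by omega, by omega⟩
    have h4 : Emap G x ((r : ℤ) + (dW : ℤ)) U ≠ ⊥ := fun hc =>
      h3 ((hbots (dW : ℤ)).mp hc)
    have e1 := (hrW _).mp h2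
    have e2 := (hrU _).mp h4
    omega
  exact ⟨hdd, fun i _ => hcompmap (i : ℤ)⟩
end

section
/- For irreducible T-modules U and W, the following are equivalent: (i) U and W are quasi-isomorphic and have the same endpoint; (ii) U and W are isomorphic as T-modules. -/
open Matrix BigOperators

section helpers

variable {X : Type*} [Fintype X] [DecidableEq X]

lemma Estar_mem (G : SimpleGraph X) [DecidableRel G.Adj] (x : X) (D : ℕ) (i : ℤ)
    (hi : i ∈ Set.Icc (0 : ℤ) (D : ℤ)) : Estar G x i ∈ Talg G x D :=
  Algebra.subset_adjoin (Set.mem_insert_iff.mpr (Or.inr ⟨i, hi, rfl⟩))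

lemma adjMat_mem (G : SimpleGraph X) [DecidableRel G.Adj] (x : X) (D : ℕ) :
    adjMat G ∈ Talg G x D :=
  Algebra.subset_adjoin (Set.mem_insert _ _)

lemma Estar_eq_zero (G : SimpleGraph X) (x : X) (D : ℕ) (hD : ∀ y, G.dist x y ≤ D)
    (i : ℤ) (hi : i ∉ Set.Icc (0 : ℤ) (D : ℤ)) : Estar G x i = 0 := by
  unfold Estar
  have h : (fun y => if ((G.dist x y : ℤ) = i) then (1 : ℂ) else 0) = fun _ => 0 := by
    funext y
    rw [if_neg]
    rintro rfl
    exact hi ⟨Int.natCast_nonneg _, by exact_mod_cast hD y⟩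
  rw [h]
  exact Matrix.diagonal_zero

lemma lowerM_mem (G : SimpleGraph X) [DecidableRel G.Adj] (x : X) (D : ℕ) :
    lowerM G x D ∈ Talg G x D := by
  refine Subalgebra.sum_mem _ fun i hi => ?_
  simp only [Finset.mem_Icc] at hi
  exact mul_mem (mul_mem (Estar_mem G x D _ ⟨by omega, by omega⟩) (adjMat_mem G x D))
    (Estar_mem G x D _ ⟨by omega, by omega⟩)

lemma flatM_mem (G : SimpleGraph X) [DecidableRel G.Adj] (x : X) (D : ℕ) :
    flatM G x D ∈ Talg G x D := by
  refine Subalgebra.sum_mem _ fun i hi => ?_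
  simp only [Finset.mem_range] at hi
  exact mul_mem (mul_mem (Estar_mem G x D _ ⟨by omega, by omega⟩) (adjMat_mem G x D))
    (Estar_mem G x D _ ⟨by omega, by omega⟩)

lemma raiseM_mem (G : SimpleGraph X) [DecidableRel G.Adj] (x : X) (D : ℕ) :
    raiseM G x D ∈ Talg G x D := by
  refine Subalgebra.sum_mem _ fun i hi => ?_
  simp only [Finset.mem_range] at hi
  exact mul_mem (mul_mem (Estar_mem G x D _ ⟨by omega, by omega⟩) (adjMat_mem G x D))
    (Estar_mem G x D _ ⟨by omega, by omega⟩)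

lemma EAE_apply (G : SimpleGraph X) [DecidableRel G.Adj] (x : X) (a b : ℤ) (y z : X) :
    (Estar G x a * adjMat G * Estar G x b) y z
      = if (G.dist x y : ℤ) = a ∧ (G.dist x z : ℤ) = b then adjMat G y z else 0 := by
  simp only [Estar]
  rw [Matrix.mul_diagonal, Matrix.diagonal_mul]
  by_cases h1 : (G.dist x y : ℤ) = a <;> by_cases h2 : (G.dist x z : ℤ) = b <;>
    simp [h1, h2]

lemma adj_decomp (G : SimpleGraph X) [DecidableRel G.Adj] (hG : G.Connected) (x : X)
    (D : ℕ) (hD : ∀ y, G.dist x y ≤ D) :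
    adjMat G = lowerM G x D + flatM G x D + raiseM G x D := by
  ext y z
  simp only [lowerM, flatM, raiseM, Matrix.add_apply, Matrix.sum_apply, EAE_apply]
  by_cases hadj : G.Adj y z
  · have hyz : G.dist y z = 1 := SimpleGraph.dist_eq_one_iff_adj.mpr hadj
    have hzy : G.dist z y = 1 := SimpleGraph.dist_eq_one_iff_adj.mpr hadj.symm
    have t1 : G.dist x z ≤ G.dist x y + 1 := by
      have := hG.dist_triangle (u := x) (v := y) (w := z); omega
    have t2 : G.dist x y ≤ G.dist x z + 1 := by
      have := hG.dist_triangle (u := x) (v := z) (w := y); omega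
    have hy := hD y; have hz := hD z
    have hA1 : adjMat G y z = 1 := by simp [adjMat, hadj]
    have key : ∀ c : ℂ,
        (∑ i ∈ Finset.Icc 1 D,
            if (G.dist x y : ℤ) = (i : ℤ) - 1 ∧ (G.dist x z : ℤ) = (i : ℤ) then c else 0)
          = (if G.dist x z = G.dist x y + 1 then c else 0) := by
      intro c
      by_cases h : G.dist x z = G.dist x y + 1
      · rw [if_pos h, Finset.sum_eq_single (G.dist x z)]
        · exact if_pos ⟨by omega, rfl⟩
        · rintro i _ hne
          refine if_neg ?_
          rintro ⟨h1, h2⟩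
          exact hne (by omega)
        · intro hb
          exact absurd (Finset.mem_Icc.mpr ⟨by omega, by omega⟩) hb
      · rw [if_neg h]
        refine Finset.sum_eq_zero fun i _ => if_neg ?_
        rintro ⟨h1, h2⟩
        exact h (by omega)
    have key2 : ∀ c : ℂ,
        (∑ i ∈ Finset.range (D + 1),
            if (G.dist x y : ℤ) = (i : ℤ) ∧ (G.dist x z : ℤ) = (i : ℤ) then c else 0)
          = (if G.dist x y = G.dist x z then c else 0) := by
      intro c
      by_cases h : G.dist x y = G.dist x z
      · rw [if_pos h, Finset.sum_eq_single (G.dist x z)]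
        · exact if_pos ⟨by omega, rfl⟩
        · rintro i _ hne
          refine if_neg ?_
          rintro ⟨h1, h2⟩
          exact hne (by omega)
        · intro hb
          exact absurd (Finset.mem_range.mpr (by omega)) hb
      · rw [if_neg h]
        refine Finset.sum_eq_zero fun i _ => if_neg ?_
        rintro ⟨h1, h2⟩
        exact h (by omega)
    have key3 : ∀ c : ℂ,
        (∑ i ∈ Finset.range D,
            if (G.dist x y : ℤ) = (i : ℤ) + 1 ∧ (G.dist x z : ℤ) = (i : ℤ) then c else 0)
          = (if G.dist x y = G.dist x z + 1 then c else 0) := by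
      intro c
      by_cases h : G.dist x y = G.dist x z + 1
      · rw [if_pos h, Finset.sum_eq_single (G.dist x z)]
        · exact if_pos ⟨by omega, rfl⟩
        · rintro i _ hne
          refine if_neg ?_
          rintro ⟨h1, h2⟩
          exact hne (by omega)
        · intro hb
          exact absurd (Finset.mem_range.mpr (by omega)) hb
      · rw [if_neg h]
        refine Finset.sum_eq_zero fun i _ => if_neg ?_
        rintro ⟨h1, h2⟩
        exact h (by omega)
    rw [key, key2, key3]
    rcases (by omega : G.dist x z = G.dist x y + 1 ∨ G.dist x y = G.dist x z
        ∨ G.dist x y = G.dist x z + 1) with h | h | h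
    · rw [if_pos h, if_neg (by omega), if_neg (by omega)]
      ring
    · rw [if_neg (by omega), if_pos h, if_neg (by omega)]
      ring
    · rw [if_neg (by omega), if_neg (by omega), if_pos h]
      ring
  · have hA0 : adjMat G y z = 0 := by simp [adjMat, hadj]
    simp [hA0]

lemma comm_Talg (G : SimpleGraph X) [DecidableRel G.Adj] (x : X) (D : ℕ)
    {U : Submodule ℂ (X → ℂ)}
    (hstab : ∀ S ∈ Talg G x D, ∀ u ∈ U, S.mulVec u ∈ U)
    (σ : (X → ℂ) →ₗ[ℂ] (X → ℂ))
    (hA : ∀ u ∈ U, σ ((adjMat G).mulVec u) = (adjMat G).mulVec (σ u))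
    (hE : ∀ i : ℤ, ∀ u ∈ U, σ ((Estar G x i).mulVec u) = (Estar G x i).mulVec (σ u)) :
    ∀ S ∈ Talg G x D, ∀ u ∈ U, σ (S.mulVec u) = S.mulVec (σ u) := by
  intro S hS
  induction hS using Algebra.adjoin_induction with
  | mem S hS =>
      rw [Set.mem_insert_iff] at hS
      rcases hS with rfl | ⟨i, _, rfl⟩
      · exact hA
      · exact hE i
  | algebraMap r =>
      intro u hu
      rw [Algebra.algebraMap_eq_smul_one, Matrix.smul_mulVec, Matrix.one_mulVec,
        Matrix.smul_mulVec, Matrix.one_mulVec]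
      exact σ.map_smul r u
  | add S T hS hT ihS ihT =>
      intro u hu
      rw [Matrix.add_mulVec, map_add, ihS u hu, ihT u hu, Matrix.add_mulVec]
  | mul S T hS hT ihS ihT =>
      intro u hu
      rw [← Matrix.mulVec_mulVec, ihS _ (hstab T hT u hu), ihT u hu, Matrix.mulVec_mulVec]

lemma endpoint_eq (G : SimpleGraph X) [DecidableRel G.Adj] (x : X) (D : ℕ)
    (hD : ∀ y, G.dist x y ≤ D)
    {U W : Submodule ℂ (X → ℂ)}
    (hstab : ∀ S ∈ Talg G x D, ∀ u ∈ U, S.mulVec u ∈ U)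
    {r dU r' dW : ℕ} (hrU : HasEndpointDiam G x U r dU) (hrW : HasEndpointDiam G x W r' dW)
    (σ : (X → ℂ) →ₗ[ℂ] (X → ℂ)) (hmap : U.map σ = W)
    (hinj : ∀ u ∈ U, σ u = 0 → u = 0)
    (hE : ∀ i : ℤ, ∀ u ∈ U, σ ((Estar G x i).mulVec u) = (Estar G x i).mulVec (σ u)) :
    r = r' := by
  have hUr : Emap G x r U ≠ ⊥ := (hrU r).mpr ⟨le_rfl, by omega⟩
  have hrD : (r : ℤ) ≤ (D : ℤ) := by
    by_contra h
    apply hUr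
    unfold Emap
    rw [Estar_eq_zero G x D hD r (by
      rw [Set.mem_Icc]; push_neg; intro _; omega), Matrix.mulVecLin_zero,
      Submodule.map_zero]
  -- r' ≤ r
  obtain ⟨v, hvmem, hvne⟩ := Submodule.exists_mem_ne_zero_of_ne_bot hUr
  obtain ⟨u, hu, rfl⟩ := hvmem
  have hEu : (Estar G x r).mulVec u ∈ U :=
    hstab _ (Estar_mem G x D _ ⟨Int.natCast_nonneg _, hrD⟩) u hu
  have hσu : σ u ∈ W := hmap ▸ Submodule.mem_map_of_mem hu
  have h1 : σ ((Estar G x r).mulVec u) ≠ 0 := by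
    intro h0
    exact hvne (by rw [Matrix.mulVecLin_apply]; exact hinj _ hEu h0)
  have hWr : Emap G x r W ≠ ⊥ := by
    rw [Submodule.ne_bot_iff]
    refine ⟨(Estar G x r).mulVecLin (σ u), Submodule.mem_map_of_mem hσu, ?_⟩
    rw [Matrix.mulVecLin_apply, ← hE r u hu]
    exact h1
  have hr'r := (hrW r).mp hWr
  -- r ≤ r'
  have hWr' : Emap G x r' W ≠ ⊥ := (hrW r').mpr ⟨le_rfl, by omega⟩
  have hUr' : Emap G x r' U ≠ ⊥ := by
    intro hbot
    apply hWr'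
    rw [Submodule.eq_bot_iff]
    rintro v ⟨w, hw, rfl⟩
    rw [← hmap] at hw
    obtain ⟨u, hu, rfl⟩ := hw
    have h0 : (Estar G x r').mulVec u = 0 :=
      (Submodule.eq_bot_iff _).mp hbot _ (Submodule.mem_map_of_mem hu)
    rw [Matrix.mulVecLin_apply, ← hE r' u hu, h0, map_zero]
  have := (hrU r').mp hUr'
  omega

end helpers

theorem stmt18 {X : Type*} [Fintype X] [DecidableEq X]
    (G : SimpleGraph X) [DecidableRel G.Adj] (hG : G.Connected) (x : X) (D : ℕ)
    (hD : ∀ y, G.dist x y ≤ D) (hD2 : ∃ y, G.dist x y = D)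
    (U W : Submodule ℂ (X → ℂ))
    (hU : IsIrredMod (Talg G x D) U) (hW : IsIrredMod (Talg G x D) W)
    (r dU r' dW : ℕ)
    (hrU : HasEndpointDiam G x U r dU) (hrW : HasEndpointDiam G x W r' dW) :
    ((∃ σ : (X → ℂ) →ₗ[ℂ] (X → ℂ), IsQuasiIso G x D U W σ ((r' : ℤ) - (r : ℤ)))
        ∧ r = r')
      ↔ ∃ σ : (X → ℂ) →ₗ[ℂ] (X → ℂ), IsTIso G x D U W σ := by
  constructor
  · rintro ⟨⟨σ, hmap, hinj, hL, hF, hR, hE⟩, rfl⟩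
    refine ⟨σ, hmap, hinj, ?_⟩
    have hE0 : ∀ i : ℤ, ∀ u ∈ U, σ ((Estar G x i).mulVec u)
        = (Estar G x i).mulVec (σ u) := by
      intro i u hu
      have h := hE i u hu
      simpa using h
    have hA : ∀ u ∈ U, σ ((adjMat G).mulVec u) = (adjMat G).mulVec (σ u) := by
      intro u hu
      rw [adj_decomp G hG x D hD, Matrix.add_mulVec, Matrix.add_mulVec, map_add, map_add,
        hL u hu, hF u hu, hR u hu, Matrix.add_mulVec, Matrix.add_mulVec]
    exact comm_Talg G x D hU.1 σ hA hE0
  · rintro ⟨σ, hmap, hinj, hcomm⟩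
    have hE0 : ∀ i : ℤ, ∀ u ∈ U, σ ((Estar G x i).mulVec u)
        = (Estar G x i).mulVec (σ u) := by
      intro i u hu
      by_cases hi : i ∈ Set.Icc (0 : ℤ) (D : ℤ)
      · exact hcomm _ (Estar_mem G x D i hi) u hu
      · rw [Estar_eq_zero G x D hD i hi, Matrix.zero_mulVec, Matrix.zero_mulVec, map_zero]
    have hrr : r = r' := endpoint_eq G x D hD hU.1 hrU hrW σ hmap hinj hE0
    refine ⟨⟨σ, hmap, hinj, ?_, ?_, ?_, ?_⟩, hrr⟩
    · exact fun u hu => hcomm _ (lowerM_mem G x D) u hu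
    · exact fun u hu => hcomm _ (flatM_mem G x D) u hu
    · exact fun u hu => hcomm _ (raiseM_mem G x D) u hu
    · intro i u hu
      have h0 : (r' : ℤ) - (r : ℤ) = 0 := by omega
      rw [h0, add_zero]
      exact hE0 i u hu
end
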